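/- arXiv:2410.02843 — 2 statements merged into one kernel-verified Lean document; each statement's English description precedes it below -/
import Mathlib

section
/- Let L be a linear endomorphism of a finite-dimensional real vector space, P a linear projection (P ∘ P = P), and Q = id − P. Then for all t ≥ 0, exp(t L) = exp(t (Q ∘ L)) + ∫₀ᵗ exp(s L) ∘ P ∘ L ∘ exp((t − s) (Q ∘ L)) ds (the Dyson identity). -/
open NormedSpace intervalIntegral

/-- Dyson identity: for a linear endomorphism `L` of a finite-dimensional real vector
space and an idempotent `P` with `Q = 1 - P`, for all `t ≥ 0`,
`exp(t L) = exp(t (Q L)) + ∫₀ᵗ exp(s L) P L exp((t-s)(Q L)) ds`. -/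
theorem dyson_identity
    {E : Type*} [NormedAddCommGroup E] [NormedSpace ℝ E] [FiniteDimensional ℝ E]
    (L P : E →L[ℝ] E) (hP : P * P = P) (Q : E →L[ℝ] E) (hQ : Q = 1 - P)
    (t : ℝ) (ht : 0 ≤ t) :
    exp (t • L) =
      exp (t • (Q * L)) +
        ∫ s in (0:ℝ)..t, exp (s • L) * P * L * exp ((t - s) • (Q * L)) := by
  have key : ∀ s : ℝ, HasDerivAt (fun s => exp (s • L) * exp ((t - s) • (Q * L)))
      (exp (s • L) * P * L * exp ((t - s) • (Q * L))) s := by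
    intro s
    have h1 : HasDerivAt (fun s : ℝ => exp (s • L)) (exp (s • L) * L) s :=
      hasDerivAt_exp_smul_const L s
    have h2 : HasDerivAt (fun s : ℝ => exp ((t - s) • (Q * L)))
        (-((Q * L) * exp ((t - s) • (Q * L)))) s := by
      have hs : HasDerivAt (fun s : ℝ => t - s) (-1) s := (hasDerivAt_id s).const_sub t
      have h := (hasDerivAt_exp_smul_const' (Q * L) (t - s)).scomp s hs
      simpa [Function.comp_def] using h
    have h3 := h1.mul h2
    refine h3.congr_deriv ?_
    subst hQ
    noncomm_ring
  have c1 : Continuous fun s : ℝ => exp (s • L) :=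
    (letI := NormedAlgebra.restrictScalars ℚ ℝ (E →L[ℝ] E); exp_continuous).comp (continuous_id.smul continuous_const)
  have c2 : Continuous fun s : ℝ => exp ((t - s) • (Q * L)) :=
    (letI := NormedAlgebra.restrictScalars ℚ ℝ (E →L[ℝ] E); exp_continuous).comp (((continuous_const.sub continuous_id).smul continuous_const))
  have hcont : Continuous fun s : ℝ => exp (s • L) * P * L * exp ((t - s) • (Q * L)) := by
    exact ((c1.mul continuous_const).mul continuous_const).mul c2
  have heq := intervalIntegral.integral_eq_sub_of_hasDerivAt
    (f := fun s => exp (s • L) * exp ((t - s) • (Q * L)))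
    (fun s _ => key s) (hcont.intervalIntegrable 0 t)
  simp only [sub_self, zero_smul, exp_zero, mul_one, one_mul, sub_zero] at heq
  rw [heq]
  abel
end

section
/- Let L be a linear endomorphism of a finite-dimensional real vector space, P an idempotent linear map, and Q = id − P. Then for all t ≥ 0, the derivative of t ↦ exp(t L) satisfies d/dt exp(t L) = exp(t L) ∘ P ∘ L + exp(t (Q∘L)) ∘ Q ∘ L + ∫₀ᵗ exp(s L) ∘ P ∘ L ∘ exp((t−s)(Q∘L)) ∘ Q ∘ L ds (the Mori–Zwanzig operator equation). -/
open NormedSpace intervalIntegral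

set_option maxHeartbeats 1000000 in
set_option synthInstance.maxHeartbeats 400000 in
/-- Mori–Zwanzig operator equation: the derivative of `t ↦ exp(t L)` decomposes into a
Markovian term, a fluctuation term and a memory integral. -/
theorem mori_zwanzig_operator_equation
    {E : Type*} [NormedAddCommGroup E] [NormedSpace ℝ E] [FiniteDimensional ℝ E]
    (L P : E →L[ℝ] E) (hP : P * P = P) (Q : E →L[ℝ] E) (hQ : Q = 1 - P)
    (t : ℝ) (ht : 0 ≤ t) :
    HasDerivAt (fun u : ℝ => exp (u • L))
      (exp (t • L) * P * L + exp (t • (Q * L)) * Q * L +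
        ∫ s in (0:ℝ)..t, exp (s • L) * P * L * exp ((t - s) • (Q * L)) * Q * L) t := by
  have key : ∀ (M : E →L[ℝ] E) (r : ℝ),
      HasDerivAt (fun u : ℝ => exp (u • M)) (exp (r • M) * M) r := fun M r =>
    hasDerivAt_exp_smul_const M r
  -- FTC for g s = exp(s•L) * exp((t-s)•(Q*L)) * (Q*L)
  have hg : ∀ s ∈ Set.uIcc (0:ℝ) t,
      HasDerivAt (fun s : ℝ => exp (s • L) * exp ((t - s) • (Q * L)) * (Q * L))
        (exp (s • L) * P * L * exp ((t - s) • (Q * L)) * Q * L) s := by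
    intro s _
    have h2 : HasDerivAt (fun s : ℝ => exp ((t - s) • (Q * L)))
        (-(exp ((t - s) • (Q * L)) * (Q * L))) s := by
      have := (key (Q * L) (t - s)).scomp s ((hasDerivAt_id s).const_sub t)
      simpa [Function.comp_def] using this
    have h3 := ((key L s).mul h2).mul_const (Q * L)
    convert h3 using 1
    · rfl
    · rfl
    · rfl
    · rfl
    have hc : exp ((t - s) • (Q * L)) * (Q * L) = (Q * L) * exp ((t - s) • (Q * L)) :=
      (((Commute.refl (Q * L)).smul_left (t - s)).exp_left).eq
    rw [hc, hQ]
    noncomm_ring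
  have hcont : Continuous (fun s : ℝ =>
      exp (s • L) * P * L * exp ((t - s) • (Q * L)) * Q * L) := by
    have he : Continuous (fun s : ℝ => exp (s • L)) :=
      continuous_iff_continuousAt.2 fun r => (key L r).continuousAt
    have he2 : Continuous (fun s : ℝ => exp ((t - s) • (Q * L))) :=
      (continuous_iff_continuousAt.2 fun r => (key (Q * L) r).continuousAt).comp
        (continuous_const.sub continuous_id)
    exact ((((he.mul continuous_const).mul continuous_const).mul he2).mul
      continuous_const).mul continuous_const
  have hint := intervalIntegral.integral_eq_sub_of_hasDerivAt hg (hcont.intervalIntegrable 0 t)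
  have hmain := key L t
  convert hmain using 1
  rw [hint]
  simp only [sub_self, zero_smul, exp_zero, sub_zero, one_mul, mul_one]
  rw [hQ]
  noncomm_ring
end
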